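/- arXiv:1612.08888 — 3 statements merged into one kernel-verified Lean document; each statement's English description precedes it below -/
import Mathlib

section
/- Proposition (completely mixed equilibria vs commitment): Let Γ be a non-degenerate bimatrix game with a completely mixed Nash equilibrium (x^N, y^N) (all coordinates of x^N and of y^N are strictly positive), and suppose x^N is not a maximin strategy of player I, i.e. min_j α(x^N, e_j) < v_A. Then α^L > α(x^N, y^N). -/
open Matrix

noncomputable section

/-- The set of mixed strategies: the standard simplex in `ℝ^m`. -/
def Simp (m : ℕ) : Set (Fin m → ℝ) := stdSimplex ℝ (Fin m)

/-- Bilinear payoff `xᵀ A y`. -/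
def pay {m n : ℕ} (A : Matrix (Fin m) (Fin n) ℝ) (x : Fin m → ℝ) (y : Fin n → ℝ) : ℝ :=
  x ⬝ᵥ A.mulVec y

/-- Payoff of a mixed strategy `x` against the pure strategy `j`: `α(x, e_j) = (xᵀA)_j`. -/
def purePay {m n : ℕ} (A : Matrix (Fin m) (Fin n) ℝ) (x : Fin m → ℝ) (j : Fin n) : ℝ :=
  Matrix.vecMul x A j

/-- Pure best replies of player II against `x`. -/
def BRII {m n : ℕ} (B : Matrix (Fin m) (Fin n) ℝ) (x : Fin m → ℝ) : Set (Fin n) :=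
  {j | ∀ k, purePay B x k ≤ purePay B x j}

/-- Best-reply region `X(j)` of column `j`. -/
def XReg {m n : ℕ} (B : Matrix (Fin m) (Fin n) ℝ) (j : Fin n) : Set (Fin m → ℝ) :=
  {x ∈ Simp m | j ∈ BRII B x}

/-- `D`: columns whose best-reply region has a fully mixed point. -/
def Dset {m n : ℕ} (B : Matrix (Fin m) (Fin n) ℝ) : Set (Fin n) :=
  {j | ∃ x ∈ XReg B j, ∀ i, 0 < x i}

/-- `E(j)`: columns of `B` payoff-equivalent to column `j`. -/
def Ecols {m n : ℕ} (B : Matrix (Fin m) (Fin n) ℝ) (j : Fin n) : Set (Fin n) :=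
  {k | ∀ i, B i k = B i j}

/-- `min_j α(x, e_j)`. -/
def minPure {m n : ℕ} (A : Matrix (Fin m) (Fin n) ℝ) (x : Fin m → ℝ) : ℝ :=
  sInf {w | ∃ j, w = purePay A x j}

/-- `max_j α(x, e_j)`. -/
def maxPure {m n : ℕ} (A : Matrix (Fin m) (Fin n) ℝ) (x : Fin m → ℝ) : ℝ :=
  sSup {w | ∃ j, w = purePay A x j}

/-- `max_{j ∈ BR_II(x)} α(x, e_j)`. -/
def maxBR {m n : ℕ} (A B : Matrix (Fin m) (Fin n) ℝ) (x : Fin m → ℝ) : ℝ :=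
  sSup {w | ∃ j ∈ BRII B x, w = purePay A x j}

/-- Matrix game value `v_A = max_{x ∈ X} min_j α(x, e_j)`. -/
def matVal {m n : ℕ} (A : Matrix (Fin m) (Fin n) ℝ) : ℝ :=
  sSup {v | ∃ x ∈ Simp m, v = minPure A x}

/-- `min_{k ∈ E(j)} α(x, e_k)`. -/
def minE {m n : ℕ} (A B : Matrix (Fin m) (Fin n) ℝ) (j : Fin n) (x : Fin m → ℝ) : ℝ :=
  sInf {w | ∃ k ∈ Ecols B j, w = purePay A x k}

/-- Commitment value `α^L = max_{j∈D} max_{x∈X(j)} min_{k∈E(j)} α(x,e_k)`. -/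
def alphaL {m n : ℕ} (A B : Matrix (Fin m) (Fin n) ℝ) : ℝ :=
  sSup {v | ∃ j ∈ Dset B, ∃ x ∈ XReg B j, v = minE A B j x}

/-- Highest leader payoff `α^H = max_{j : X(j)≠∅} max_{x∈X(j)} α(x,e_j)`. -/
def alphaH {m n : ℕ} (A B : Matrix (Fin m) (Fin n) ℝ) : ℝ :=
  sSup {v | ∃ j, ∃ x ∈ XReg B j, v = purePay A x j}

/-- Commitment optimal strategies of the leader (player I). -/
def XLset {m n : ℕ} (A B : Matrix (Fin m) (Fin n) ℝ) : Set (Fin m → ℝ) :=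
  {x | ∃ j ∈ Dset B, x ∈ XReg B j ∧ minE A B j x = alphaL A B}

/-- Non-degeneracy for player I: no mixed strategy of player I has more pure best
replies (among player II's pure strategies) than the size of its support. -/
def NondegFor {m n : ℕ} (B : Matrix (Fin m) (Fin n) ℝ) : Prop :=
  ∀ x ∈ Simp m, (BRII B x).ncard ≤ {i | x i ≠ 0}.ncard

/-- Nash equilibrium of the bimatrix game `(A,B)`. -/
def isNE {m n : ℕ} (A B : Matrix (Fin m) (Fin n) ℝ) (x : Fin m → ℝ) (y : Fin n → ℝ) : Prop :=
  x ∈ Simp m ∧ y ∈ Simp n ∧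
  (∀ x' ∈ Simp m, pay A x' y ≤ pay A x y) ∧
  (∀ y' ∈ Simp n, pay B x y' ≤ pay B x y)

/-- Strategies of player I appearing in some Nash equilibrium. -/
def NEX {m n : ℕ} (A B : Matrix (Fin m) (Fin n) ℝ) : Set (Fin m → ℝ) :=
  {x | ∃ y, isNE A B x y}

/-- Strategies of player II appearing in some Nash equilibrium. -/
def NEY {m n : ℕ} (A B : Matrix (Fin m) (Fin n) ℝ) : Set (Fin n → ℝ) :=
  {y | ∃ x, isNE A B x y}

/-- Weakly unilaterally competitive bimatrix game. -/
def WUC {m n : ℕ} (A B : Matrix (Fin m) (Fin n) ℝ) : Prop :=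
  (∀ x₁ ∈ Simp m, ∀ x₂ ∈ Simp m, ∀ y ∈ Simp n,
    (pay A x₁ y > pay A x₂ y → pay B x₁ y ≤ pay B x₂ y) ∧
    (pay A x₁ y = pay A x₂ y → pay B x₁ y = pay B x₂ y)) ∧
  (∀ y₁ ∈ Simp n, ∀ y₂ ∈ Simp n, ∀ x ∈ Simp m,
    (pay B x y₁ > pay B x y₂ → pay A x y₁ ≤ pay A x y₂) ∧
    (pay B x y₁ = pay B x y₂ → pay A x y₁ = pay A x y₂))

section AuxStmt4

/-- Convex combination with positive weights equal to an upper bound forces equality. -/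
lemma cc_eq {k : ℕ} (w p : Fin k → ℝ) (c : ℝ) (hw : ∀ j, 0 < w j)
    (hle : ∀ j, p j ≤ c) (hc : ∑ j, w j * p j = c) (h1 : ∑ j, w j = 1) :
    ∀ j, p j = c := by
  have hz : ∑ j, w j * (c - p j) = 0 := by
    have : ∑ j, w j * (c - p j) = (∑ j, w j) * c - ∑ j, w j * p j := by
      rw [Finset.sum_mul, ← Finset.sum_sub_distrib]
      exact Finset.sum_congr rfl fun j _ => by ring
    rw [this, h1, hc]; ring
  intro j
  have hterm : w j * (c - p j) = 0 := by
    have := (Finset.sum_eq_zero_iff_of_nonneg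
      (fun i _ => mul_nonneg (hw i).le (sub_nonneg.2 (hle i)))).1 hz j (Finset.mem_univ j)
    exact this
  have := mul_eq_zero.1 hterm
  rcases this with h | h
  · exact absurd h (hw j).ne'
  · linarith [sub_eq_zero.1 h]

lemma pay_sum {m n : ℕ} (A : Matrix (Fin m) (Fin n) ℝ) (x : Fin m → ℝ) (y : Fin n → ℝ) :
    pay A x y = ∑ j, y j * purePay A x j := by
  unfold pay purePay
  rw [Matrix.dotProduct_mulVec]
  simp [dotProduct, mul_comm]

lemma pay_rowsum {m n : ℕ} (A : Matrix (Fin m) (Fin n) ℝ) (x : Fin m → ℝ) (y : Fin n → ℝ) :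
    pay A x y = ∑ i, x i * A.mulVec y i := by
  simp [pay, dotProduct]

lemma pay_single_right {m n : ℕ} (A : Matrix (Fin m) (Fin n) ℝ) (x : Fin m → ℝ) (j : Fin n) :
    pay A x (Pi.single j 1) = purePay A x j := by
  unfold pay purePay
  rw [Matrix.dotProduct_mulVec, dotProduct_single, mul_one]

lemma pay_single_left {m n : ℕ} (A : Matrix (Fin m) (Fin n) ℝ) (y : Fin n → ℝ) (i : Fin m) :
    pay A (Pi.single i 1) y = A.mulVec y i := by
  unfold pay
  rw [single_dotProduct, one_mul]

lemma purePay_transpose {m n : ℕ} (A : Matrix (Fin m) (Fin n) ℝ) (y : Fin n → ℝ) (i : Fin m) :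
    purePay Aᵀ y i = A.mulVec y i := by
  simp [purePay, Matrix.vecMul, Matrix.mulVec, dotProduct, mul_comm]

lemma purePay_set_eq {m n : ℕ} (A : Matrix (Fin m) (Fin n) ℝ) (x : Fin m → ℝ) :
    {w | ∃ j, w = purePay A x j} = Set.range (purePay A x) := by
  ext w; simp [eq_comm]

lemma minPure_le {m n : ℕ} (A : Matrix (Fin m) (Fin n) ℝ) (x : Fin m → ℝ) (j : Fin n) :
    minPure A x ≤ purePay A x j := by
  unfold minPure
  rw [purePay_set_eq]
  exact csInf_le (Set.finite_range _).bddBelow (Set.mem_range_self j)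

lemma minPure_mem {m n : ℕ} (hn : 0 < n) (A : Matrix (Fin m) (Fin n) ℝ) (x : Fin m → ℝ) :
    ∃ j, minPure A x = purePay A x j := by
  unfold minPure
  rw [purePay_set_eq]
  have : Nonempty (Fin n) := ⟨⟨0, hn⟩⟩
  have hne : (Set.range (purePay A x)).Nonempty := Set.range_nonempty _
  obtain ⟨j, hj⟩ := hne.csInf_mem (Set.finite_range _)
  exact ⟨j, hj.symm⟩

lemma purePay_le_bound {m n : ℕ} (A : Matrix (Fin m) (Fin n) ℝ) {x : Fin m → ℝ}
    (hx : x ∈ Simp m) (j : Fin n) : purePay A x j ≤ ∑ i, ∑ k, |A i k| := by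
  have hx1 : ∀ i, x i ≤ 1 := by
    intro i
    calc x i ≤ ∑ i', x i' :=
          Finset.single_le_sum (fun i' _ => hx.1 i') (Finset.mem_univ i)
      _ = 1 := hx.2
  have h1 : purePay A x j = ∑ i, x i * A i j := by
    simp [purePay, Matrix.vecMul, dotProduct]
  rw [h1]
  refine Finset.sum_le_sum fun i _ => ?_
  calc x i * A i j ≤ x i * |A i j| := mul_le_mul_of_nonneg_left (le_abs_self _) (hx.1 i)
    _ ≤ 1 * |A i j| := mul_le_mul_of_nonneg_right (hx1 i) (abs_nonneg _)
    _ = |A i j| := one_mul _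
    _ ≤ ∑ k, |A i k| := Finset.single_le_sum (f := fun k => |A i k|)
          (fun k _ => abs_nonneg _) (Finset.mem_univ j)

end AuxStmt4

/-- in a non-degenerate bimatrix game, at a completely mixed Nash
equilibrium `(x^N, y^N)` where `x^N` is not maximin (`min_j α(x^N,e_j) < v_A`),
the commitment value strictly exceeds the equilibrium payoff: `α^L > α(x^N,y^N)`. -/
theorem stmt4 {m n : ℕ} (A B : Matrix (Fin m) (Fin n) ℝ)
    (hndI : NondegFor B) (hndII : NondegFor Aᵀ)
    (xN : Fin m → ℝ) (yN : Fin n → ℝ) (hNE : isNE A B xN yN)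
    (hx : ∀ i, 0 < xN i) (hy : ∀ j, 0 < yN j)
    (hnotmaximin : minPure A xN < matVal A) :
    pay A xN yN < alphaL A B := by
  obtain ⟨hxS, hyS, hA, hB⟩ := hNE
  set c : ℝ := pay A xN yN with hc
  -- positivity of dimensions
  have hn : 0 < n := by
    rcases Nat.eq_zero_or_pos n with h | h
    · exfalso; subst h
      have := hyS.2
      simp at this
    · exact h
  have hm : 0 < m := by
    rcases Nat.eq_zero_or_pos m with h | h
    · exfalso; subst h
      have := hxS.2
      simp at this
    · exact h
  -- every pure strategy of player II is a best reply to xN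
  have pB : ∀ j, purePay B xN j = pay B xN yN := by
    refine cc_eq yN (purePay B xN) (pay B xN yN) hy ?_ (pay_sum B xN yN).symm hyS.2
    intro j
    have := hB (Pi.single j 1) (single_mem_stdSimplex ℝ j)
    rwa [pay_single_right] at this
  -- every pure strategy of player I is a best reply to yN
  have pA : ∀ i, A.mulVec yN i = c := by
    refine cc_eq xN (A.mulVec yN) c hx ?_ (pay_rowsum A xN yN).symm hxS.2
    intro i
    have := hA (Pi.single i 1) (single_mem_stdSimplex ℝ i)
    rwa [pay_single_left] at this
  -- all columns are best replies to xN
  have hBRx : BRII B xN = Set.univ := by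
    ext j
    simp only [BRII, Set.mem_setOf_eq, Set.mem_univ, iff_true]
    intro k
    rw [pB k, pB j]
  -- ncard of support of a fully positive vector
  have hsuppx : {i | xN i ≠ 0} = (Set.univ : Set (Fin m)) := by
    ext i; simp [(hx i).ne']
  have hsuppy : {j | yN j ≠ 0} = (Set.univ : Set (Fin n)) := by
    ext j; simp [(hy j).ne']
  -- n ≤ m from nondegeneracy of B
  have hnm : n ≤ m := by
    have := hndI xN hxS
    rw [hBRx, hsuppx, Set.ncard_univ, Set.ncard_univ, Nat.card_eq_fintype_card,
      Nat.card_eq_fintype_card, Fintype.card_fin, Fintype.card_fin] at this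
    exact this
  -- m ≤ n from nondegeneracy of Aᵀ
  have hmn : m ≤ n := by
    have hBRy : BRII Aᵀ yN = Set.univ := by
      ext i
      simp only [BRII, Set.mem_setOf_eq, Set.mem_univ, iff_true]
      intro k
      rw [purePay_transpose, purePay_transpose, pA k, pA i]
    have := hndII yN hyS
    rw [hBRy, hsuppy, Set.ncard_univ, Set.ncard_univ, Nat.card_eq_fintype_card,
      Nat.card_eq_fintype_card, Fintype.card_fin, Fintype.card_fin] at this
    exact this
  have hmeqn : m = n := le_antisymm hmn hnm
  -- columns of B are pairwise distinct
  have hcol : ∀ j0 k0 : Fin n, (∀ i, B i k0 = B i j0) → k0 = j0 := by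
    intro j0 k0 hcols
    by_contra hne
    -- a linear map with small codomain
    let T : (Fin m → ℝ) →ₗ[ℝ] ({j : Fin n // j ≠ j0} → ℝ) :=
      { toFun := fun d j =>
          if (j : Fin n) = k0 then ∑ i, d i
          else Matrix.vecMul d B j - Matrix.vecMul d B j0
        map_add' := by
          intro a b
          funext j
          by_cases h : (j : Fin n) = k0 <;>
            simp [h, Matrix.add_vecMul, Finset.sum_add_distrib] <;> ring
        map_smul' := by
          intro r a
          funext j
          by_cases h : (j : Fin n) = k0 <;>
            simp [h, Matrix.smul_vecMul, Finset.mul_sum, smul_eq_mul] <;> ring }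
    have hcard : Fintype.card {j : Fin n // j ≠ j0} = n - 1 := by
      have : Fintype.card {j : Fin n // ¬ (j = j0)} =
          Fintype.card (Fin n) - Fintype.card {j : Fin n // j = j0} :=
        Fintype.card_subtype_compl _
      simpa [Fintype.card_subtype_eq] using this
    have hni : ¬ Function.Injective T := by
      intro hinj
      have hle := LinearMap.finrank_le_finrank_of_injective hinj
      rw [Module.finrank_fintype_fun_eq_card, Module.finrank_fintype_fun_eq_card,
        Fintype.card_fin, hcard] at hle
      omega
    obtain ⟨d, hd0, hdne⟩ : ∃ d, T d = 0 ∧ d ≠ 0 := by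
      by_contra h
      push_neg at h
      exact hni ((injective_iff_map_eq_zero T).2 fun a ha => h a ha)
    have hk0 : k0 ≠ j0 := hne
    have hsum_d : ∑ i, d i = 0 := by
      have := congrFun hd0 ⟨k0, hk0⟩
      simpa [T] using this
    have hconst : ∀ j : Fin n, Matrix.vecMul d B j = Matrix.vecMul d B j0 := by
      intro j
      by_cases h1 : j = j0
      · rw [h1]
      · by_cases h2 : j = k0
        · subst h2
          simp only [Matrix.vecMul, dotProduct]
          exact Finset.sum_congr rfl fun i _ => by rw [hcols i]
        · have := congrFun hd0 ⟨j, h1⟩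
          simp only [T, LinearMap.coe_mk, AddHom.coe_mk, Pi.zero_apply] at this
          rw [if_neg h2] at this
          linarith [sub_eq_zero.1 this]
    -- some coordinate of d is negative
    have hneg : ∃ i, d i < 0 := by
      by_contra h
      push_neg at h
      apply hdne
      funext i
      have := (Finset.sum_eq_zero_iff_of_nonneg (fun i _ => h i)).1 hsum_d i (Finset.mem_univ i)
      exact this
    -- move from xN along d until a coordinate hits zero
    have hsne : (Finset.univ.filter fun i => d i < 0).Nonempty := by
      obtain ⟨i, hi⟩ := hneg
      exact ⟨i, Finset.mem_filter.2 ⟨Finset.mem_univ i, hi⟩⟩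
    set t : ℝ := (Finset.univ.filter fun i => d i < 0).inf' hsne (fun i => xN i / (-d i)) with ht
    have htpos : 0 < t := by
      rw [ht]
      rw [Finset.lt_inf'_iff]
      intro i hi
      have hdi : d i < 0 := (Finset.mem_filter.1 hi).2
      exact div_pos (hx i) (by linarith)
    set xs : Fin m → ℝ := fun i => xN i + t * d i with hxs
    have hxsnn : ∀ i, 0 ≤ xs i := by
      intro i
      rcases le_or_gt 0 (d i) with h | h
      · have : 0 ≤ t * d i := mul_nonneg htpos.le h
        simp only [hxs]; linarith [hx i]
      · have hmem : i ∈ Finset.univ.filter fun i => d i < 0 :=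
          Finset.mem_filter.2 ⟨Finset.mem_univ i, h⟩
        have hle : t ≤ xN i / (-d i) := Finset.inf'_le _ hmem
        have hd' : (0:ℝ) < -d i := by linarith
        have : t * (-d i) ≤ xN i := by
          rw [← le_div_iff₀ hd']; exact hle
        simp only [hxs]; nlinarith
    have hxsum : ∑ i, xs i = 1 := by
      simp only [hxs]
      rw [Finset.sum_add_distrib, ← Finset.mul_sum, hsum_d, mul_zero, add_zero]
      exact hxS.2
    have hxsS : xs ∈ Simp m := ⟨hxsnn, hxsum⟩
    obtain ⟨i0, hi0mem, hi0⟩ :=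
      Finset.exists_mem_eq_inf' hsne (fun i => xN i / (-d i))
    have hdi0 : d i0 < 0 := (Finset.mem_filter.1 hi0mem).2
    have hxsz : xs i0 = 0 := by
      simp only [hxs]
      rw [← ht] at hi0
      rw [hi0]
      have hd0' : d i0 ≠ 0 := hdi0.ne
      have : xN i0 / (-d i0) * d i0 = -xN i0 := by
        rw [div_mul_eq_mul_div, div_neg, mul_div_assoc, div_self hd0', mul_one]
      linarith
    -- all columns are still best replies to xs
    have hBRxs : BRII B xs = Set.univ := by
      have hpp : ∀ j, purePay B xs j = purePay B xN j + t * Matrix.vecMul d B j := by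
        intro j
        simp only [purePay, Matrix.vecMul, dotProduct, hxs]
        rw [Finset.mul_sum, ← Finset.sum_add_distrib]
        exact Finset.sum_congr rfl fun i _ => by ring
      ext j
      simp only [BRII, Set.mem_setOf_eq, Set.mem_univ, iff_true]
      intro k
      rw [hpp k, hpp j, pB k, pB j, hconst k, hconst j]
    -- contradiction with nondegeneracy
    have hsub : {i | xs i ≠ 0} ⊂ Set.univ := by
      rw [Set.ssubset_univ_iff]
      intro hcontra
      have : i0 ∈ {i | xs i ≠ 0} := hcontra ▸ Set.mem_univ i0
      exact this hxsz
    have hlt : ({i | xs i ≠ 0}).ncard < m := by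
      have := Set.ncard_lt_ncard hsub Set.finite_univ
      rwa [Set.ncard_univ, Nat.card_eq_fintype_card, Fintype.card_fin] at this
    have := hndI xs hxsS
    rw [hBRxs, Set.ncard_univ, Nat.card_eq_fintype_card, Fintype.card_fin] at this
    omega
  -- hence each Ecols is a singleton, and minE is just purePay
  have hE : ∀ (j : Fin n) (x : Fin m → ℝ), minE A B j x = purePay A x j := by
    intro j x
    unfold minE
    have hset : {w | ∃ k ∈ Ecols B j, w = purePay A x k} = {purePay A x j} := by
      ext w
      simp only [Set.mem_setOf_eq, Set.mem_singleton_iff, Ecols]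
      constructor
      · rintro ⟨k, hk, rfl⟩
        rw [hcol j k hk]
      · rintro rfl
        exact ⟨j, fun i => rfl, rfl⟩
    rw [hset, csInf_singleton]
  -- matVal A ≤ c
  have hval : matVal A ≤ c := by
    unfold matVal
    apply csSup_le
    · exact ⟨minPure A xN, xN, hxS, rfl⟩
    · rintro v ⟨x, hxmem, rfl⟩
      have h1 : minPure A x ≤ pay A x yN := by
        rw [pay_sum]
        calc minPure A x = ∑ j, yN j * minPure A x := by
              rw [← Finset.sum_mul, hyS.2, one_mul]
          _ ≤ ∑ j, yN j * purePay A x j :=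
              Finset.sum_le_sum fun j _ =>
                mul_le_mul_of_nonneg_left (minPure_le A x j) (hy j).le
      exact h1.trans (hA x hxmem)
  have hltc : minPure A xN < c := lt_of_lt_of_le hnotmaximin hval
  -- some pure payoff strictly above c
  obtain ⟨j0, hj0⟩ := minPure_mem hn A xN
  have hj0lt : purePay A xN j0 < c := hj0 ▸ hltc
  have hjstar : ∃ js, c < purePay A xN js := by
    by_contra h
    push_neg at h
    have := cc_eq yN (purePay A xN) c hy h (pay_sum A xN yN).symm hyS.2
    exact absurd (this j0) hj0lt.ne
  obtain ⟨js, hjs⟩ := hjstar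
  -- conclude
  have hxreg : xN ∈ XReg B js := ⟨hxS, by rw [hBRx]; exact Set.mem_univ js⟩
  have hD : js ∈ Dset B := ⟨xN, hxreg, hx⟩
  have hmem : purePay A xN js ∈
      {v | ∃ j ∈ Dset B, ∃ x ∈ XReg B j, v = minE A B j x} :=
    ⟨js, hD, xN, hxreg, (hE js xN).symm⟩
  have hbdd : BddAbove {v | ∃ j ∈ Dset B, ∃ x ∈ XReg B j, v = minE A B j x} := by
    refine ⟨∑ i, ∑ k, |A i k|, ?_⟩
    rintro v ⟨j, _, x, hxX, rfl⟩
    rw [hE]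
    exact purePay_le_bound A hxX.1 j
  calc c < purePay A xN js := hjs
    _ ≤ alphaL A B := le_csSup hbdd hmem
end
end

section
/- Sufficient condition (suff): Let Γ be a bimatrix game such that for every x ∈ X, max_{j∈BR_II(x)} α(x,e_j) = min_{j} α(x,e_j). Then v_A = α^L = α^H. -/
open Matrix

noncomputable section

lemma purePay_apply {m n : ℕ} (A : Matrix (Fin m) (Fin n) ℝ) (x : Fin m → ℝ) (j : Fin n) :
    purePay A x j = ∑ i, x i * A i j := by
  simp [purePay, Matrix.vecMul, dotProduct]

lemma purePay_combo {m n : ℕ} (B : Matrix (Fin m) (Fin n) ℝ) (x y : Fin m → ℝ) (t : ℝ) (k : Fin n) :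
    purePay B (fun i => (1 - t) * x i + t * y i) k
      = (1 - t) * purePay B x k + t * purePay B y k := by
  simp only [purePay_apply, Finset.mul_sum, ← Finset.sum_add_distrib, add_mul, mul_assoc]

lemma mem_Simp {m : ℕ} (x : Fin m → ℝ) : x ∈ Simp m ↔ (∀ i, 0 ≤ x i) ∧ ∑ i, x i = 1 :=
  Iff.rfl

lemma finite_purePay_set {m n : ℕ} (A : Matrix (Fin m) (Fin n) ℝ) (x : Fin m → ℝ) :
    {w | ∃ j, w = purePay A x j}.Finite := by
  have : {w | ∃ j, w = purePay A x j} = Set.range (purePay A x) := by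
    ext w; simp [Set.mem_range, eq_comm]
  rw [this]; exact Set.finite_range _

lemma exists_Dmem {m n : ℕ} (hm : 0 < m) (hn : 0 < n) (B : Matrix (Fin m) (Fin n) ℝ)
    {x : Fin m → ℝ} (hx : x ∈ Simp m) : ∃ j ∈ Dset B, x ∈ XReg B j := by
  haveI hFm : Nonempty (Fin m) := ⟨⟨0, hm⟩⟩
  haveI hFn : Nonempty (Fin n) := ⟨⟨0, hn⟩⟩
  obtain ⟨hx1, hx2⟩ := hx
  set x0 : Fin m → ℝ := fun _ => (m : ℝ)⁻¹ with hx0def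
  have hminv : 0 < (m : ℝ)⁻¹ := inv_pos.mpr (Nat.cast_pos.mpr hm)
  have hx0 : x0 ∈ Simp m := by
    refine ⟨fun i => hminv.le, ?_⟩
    simp [hx0def, Finset.sum_const]
    rw [mul_inv_cancel₀ (by exact_mod_cast hm.ne')]
  set xt : ℝ → Fin m → ℝ := fun t i => (1 - t) * x i + t * x0 i with hxtdef
  have hxt : ∀ t : ℝ, 0 < t → t ≤ 1 → xt t ∈ Simp m ∧ ∀ i, 0 < xt t i := by
    intro t ht0 ht1
    have hpos : ∀ i, 0 < xt t i := by
      intro i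
      have h1 := hx1 i
      have h2 : 0 < t * x0 i := mul_pos ht0 hminv
      have h3 : 0 ≤ (1 - t) * x i := mul_nonneg (by linarith) h1
      simp only [hxtdef]; linarith
    refine ⟨⟨fun i => (hpos i).le, ?_⟩, hpos⟩
    simp only [hxtdef]
    rw [Finset.sum_add_distrib, ← Finset.mul_sum, ← Finset.mul_sum, hx2, hx0.2]
    ring
  have key : ∃ j : Fin n, ∀ ε : ℝ, 0 < ε → ∃ t : ℝ, 0 < t ∧ t < ε ∧ t ≤ 1 ∧
      ∀ k, purePay B (xt t) k ≤ purePay B (xt t) j := by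
    by_contra h
    push_neg at h
    choose ε hε hbad using h
    set δ : ℝ := min 1 (Finset.univ.inf' Finset.univ_nonempty ε) with hδdef
    have hδ0 : 0 < δ := lt_min one_pos ((Finset.lt_inf'_iff _).mpr fun j _ => hε j)
    obtain ⟨j, hj⟩ := Finite.exists_max (fun j => purePay B (xt (δ/2)) j)
    have h1 : 0 < δ/2 := by linarith
    have h2 : δ/2 < ε j := by
      have := le_trans (min_le_right 1 _) (Finset.inf'_le ε (Finset.mem_univ j))
      linarith
    have h3 : δ/2 ≤ 1 := by
      have := min_le_left 1 (Finset.univ.inf' Finset.univ_nonempty ε)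
      linarith
    obtain ⟨k, hk⟩ := hbad j (δ/2) h1 h2 h3
    exact absurd (hj k) (not_le.mpr hk)
  obtain ⟨j, hj⟩ := key
  have hjD : j ∈ Dset B := by
    obtain ⟨t, ht0, ht1, ht2, hbr⟩ := hj 1 one_pos
    exact ⟨xt t, ⟨(hxt t ht0 ht2).1, hbr⟩, (hxt t ht0 ht2).2⟩
  refine ⟨j, hjD, ⟨hx1, hx2⟩, ?_⟩
  intro k
  by_contra hlt
  push_neg at hlt
  set R : ℝ := |purePay B x0 k - purePay B x0 j - (purePay B x k - purePay B x j)| with hRdef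
  have hR0 : 0 ≤ R := abs_nonneg _
  have hεpos : 0 < (purePay B x k - purePay B x j) / (1 + R) := by
    apply div_pos (by linarith) (by linarith)
  obtain ⟨t, ht0, htε, ht1, hbr⟩ := hj _ hεpos
  have hthis := hbr k
  simp only [hxtdef] at hthis
  rw [purePay_combo, purePay_combo] at hthis
  have htb : t * (1 + R) < purePay B x k - purePay B x j := by
    have := mul_lt_mul_of_pos_right htε (show (0:ℝ) < 1 + R by linarith)
    rwa [div_mul_cancel₀ _ (by linarith : (1:ℝ) + R ≠ 0)] at this
  have hint2 := mul_le_mul_of_nonneg_left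
    (neg_abs_le (purePay B x0 k - purePay B x0 j - (purePay B x k - purePay B x j))) ht0.le
  rw [← hRdef] at hint2
  nlinarith [hthis, htb, hint2, ht0]

/-- sufficient condition (suff): if for every `x ∈ X`,
`max_{j ∈ BR_II(x)} α(x,e_j) = min_j α(x,e_j)`, then `v_A = α^L = α^H`. -/
theorem stmt5 {m n : ℕ} (A B : Matrix (Fin m) (Fin n) ℝ)
    (hsuff : ∀ x ∈ Simp m, maxBR A B x = minPure A x) :
    matVal A = alphaL A B ∧ alphaL A B = alphaH A B := by
  rcases Nat.eq_zero_or_pos m with hm | hm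
  · -- m = 0 : Simp m is empty, all three are sSup ∅ = 0
    subst hm
    have hS : Simp 0 = ∅ := by
      ext x
      simp [Simp, stdSimplex]
    have h1 : matVal A = 0 := by
      have : {v | ∃ x ∈ Simp 0, v = minPure A x} = ∅ := by
        simp [hS]
      rw [matVal, this, Real.sSup_empty]
    have h2 : alphaL A B = 0 := by
      have : {v | ∃ j ∈ Dset B, ∃ x ∈ XReg B j, v = minE A B j x} = ∅ := by
        ext v
        simp [Dset, XReg, hS]
      rw [alphaL, this, Real.sSup_empty]
    have h3 : alphaH A B = 0 := by
      have : {v | ∃ j, ∃ x ∈ XReg B j, v = purePay A x j} = ∅ := by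
        ext v
        simp [XReg, hS]
      rw [alphaH, this, Real.sSup_empty]
    exact ⟨h1.trans h2.symm, h2.trans h3.symm⟩
  rcases Nat.eq_zero_or_pos n with hn | hn
  · -- n = 0
    subst hn
    have hmp : ∀ x : Fin m → ℝ, minPure A x = 0 := by
      intro x
      have : {w | ∃ j : Fin 0, w = purePay A x j} = ∅ := by
        ext w; simp
      rw [minPure, this, Real.sInf_empty]
    have hSne : (Simp m).Nonempty := by
      refine ⟨fun _ => (m : ℝ)⁻¹, fun i => (inv_pos.mpr (Nat.cast_pos.mpr hm)).le, ?_⟩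
      simp [Finset.sum_const]
      rw [mul_inv_cancel₀ (by exact_mod_cast hm.ne')]
    have h1 : matVal A = 0 := by
      have : {v | ∃ x ∈ Simp m, v = minPure A x} = {0} := by
        ext v
        simp only [Set.mem_setOf_eq, Set.mem_singleton_iff]
        constructor
        · rintro ⟨x, -, rfl⟩; exact hmp x
        · rintro rfl; exact ⟨hSne.choose, hSne.choose_spec, (hmp _).symm⟩
      rw [matVal, this, csSup_singleton]
    have h2 : alphaL A B = 0 := by
      have : {v | ∃ j ∈ Dset B, ∃ x ∈ XReg B j, v = minE A B j x} = ∅ := by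
        ext v; simp only [Set.mem_setOf_eq, Set.mem_empty_iff_false, iff_false, not_exists]
        rintro j; exact absurd j.2 (by omega)
      rw [alphaL, this, Real.sSup_empty]
    have h3 : alphaH A B = 0 := by
      have : {v | ∃ j, ∃ x ∈ XReg B j, v = purePay A x j} = ∅ := by
        ext v; simp only [Set.mem_setOf_eq, Set.mem_empty_iff_false, iff_false, not_exists]
        rintro j; exact absurd j.2 (by omega)
      rw [alphaH, this, Real.sSup_empty]
    exact ⟨h1.trans h2.symm, h2.trans h3.symm⟩
  -- main case : 0 < m, 0 < n
  haveI hFm : Nonempty (Fin m) := ⟨⟨0, hm⟩⟩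
  haveI hFn : Nonempty (Fin n) := ⟨⟨0, hn⟩⟩
  set M : ℝ := Finset.univ.sup' Finset.univ_nonempty
    (fun j : Fin n => Finset.univ.sup' Finset.univ_nonempty (fun i : Fin m => A i j)) with hMdef
  have hM : ∀ x ∈ Simp m, ∀ j, purePay A x j ≤ M := by
    intro x hx j
    rw [purePay_apply]
    calc ∑ i, x i * A i j ≤ ∑ i, x i * M := by
          apply Finset.sum_le_sum
          intro i _
          apply mul_le_mul_of_nonneg_left _ (hx.1 i)
          have h1 : A i j ≤ Finset.univ.sup' Finset.univ_nonempty (fun i : Fin m => A i j) :=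
            Finset.le_sup' (fun i : Fin m => A i j) (Finset.mem_univ i)
          have h2 : Finset.univ.sup' Finset.univ_nonempty (fun i : Fin m => A i j) ≤ M := by
            rw [hMdef]
            exact Finset.le_sup'
              (fun j : Fin n => Finset.univ.sup' Finset.univ_nonempty (fun i : Fin m => A i j))
              (Finset.mem_univ j)
          exact le_trans h1 h2
      _ = M := by rw [← Finset.sum_mul, hx.2, one_mul]
  -- basic facts on minPure
  have hminPure_le : ∀ (x : Fin m → ℝ) (j : Fin n), minPure A x ≤ purePay A x j := by
    intro x j
    exact csInf_le (finite_purePay_set A x).bddBelow ⟨j, rfl⟩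
  -- bddAbove facts
  have hbddH : BddAbove {v | ∃ j, ∃ x ∈ XReg B j, v = purePay A x j} := by
    refine ⟨M, ?_⟩
    rintro v ⟨j, x, ⟨hx, -⟩, rfl⟩
    exact hM x hx j
  have hbddL : BddAbove {v | ∃ j ∈ Dset B, ∃ x ∈ XReg B j, v = minE A B j x} := by
    refine ⟨M, ?_⟩
    rintro v ⟨j, -, x, ⟨hx, -⟩, rfl⟩
    calc minE A B j x ≤ purePay A x j :=
          csInf_le ((finite_purePay_set A x).subset (by rintro w ⟨k, -, rfl⟩; exact ⟨k, rfl⟩)).bddBelow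
            ⟨j, fun i => rfl, rfl⟩
      _ ≤ M := hM x hx j
  have hbddV : BddAbove {v | ∃ x ∈ Simp m, v = minPure A x} := by
    refine ⟨M, ?_⟩
    rintro v ⟨x, hx, rfl⟩
    exact le_trans (hminPure_le x (Classical.arbitrary _)) (hM x hx _)
  -- (a) alphaH ≤ matVal
  have hHV : alphaH A B ≤ matVal A := by
    unfold alphaH
    apply csSup_le
    · obtain ⟨x, hx⟩ : (Simp m).Nonempty := by
        refine ⟨fun _ => (m : ℝ)⁻¹, fun i => (inv_pos.mpr (Nat.cast_pos.mpr hm)).le, ?_⟩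
        simp [Finset.sum_const]
        rw [mul_inv_cancel₀ (by exact_mod_cast hm.ne')]
      obtain ⟨j, hj⟩ := Finite.exists_max (fun j => purePay B x j)
      exact ⟨purePay A x j, Set.mem_setOf_eq ▸ ⟨j, x, ⟨hx, hj⟩, rfl⟩⟩
    rintro v ⟨j, x, ⟨hx, hbr⟩, rfl⟩
    have h1 : purePay A x j ≤ maxBR A B x := by
      apply le_csSup
      · exact ((finite_purePay_set A x).subset (by rintro w ⟨k, -, rfl⟩; exact ⟨k, rfl⟩)).bddAbove
      · exact ⟨j, hbr, rfl⟩
    rw [hsuff x hx] at h1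
    exact le_trans h1 (le_csSup hbddV ⟨x, hx, rfl⟩)
  -- (b) matVal ≤ alphaL
  have hVL : matVal A ≤ alphaL A B := by
    unfold matVal
    apply csSup_le
    · obtain ⟨x, hx⟩ : (Simp m).Nonempty := by
        refine ⟨fun _ => (m : ℝ)⁻¹, fun i => (inv_pos.mpr (Nat.cast_pos.mpr hm)).le, ?_⟩
        simp [Finset.sum_const]
        rw [mul_inv_cancel₀ (by exact_mod_cast hm.ne')]
      exact ⟨minPure A x, x, hx, rfl⟩
    rintro v ⟨x, hx, rfl⟩
    obtain ⟨j, hjD, hxj⟩ := exists_Dmem hm hn B hx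
    have h1 : minPure A x ≤ minE A B j x := by
      have hne : {w | ∃ k ∈ Ecols B j, w = purePay A x k}.Nonempty :=
        ⟨purePay A x j, j, fun i => rfl, rfl⟩
      exact le_csInf hne (by rintro w ⟨k, -, rfl⟩; exact hminPure_le x k)
    exact le_trans h1 (le_csSup hbddL ⟨j, hjD, x, hxj, rfl⟩)
  -- (c) alphaL ≤ alphaH
  have hLH : alphaL A B ≤ alphaH A B := by
    unfold alphaL
    apply csSup_le
    · obtain ⟨x, hx⟩ : (Simp m).Nonempty := by
        refine ⟨fun _ => (m : ℝ)⁻¹, fun i => (inv_pos.mpr (Nat.cast_pos.mpr hm)).le, ?_⟩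
        simp [Finset.sum_const]
        rw [mul_inv_cancel₀ (by exact_mod_cast hm.ne')]
      obtain ⟨j, hjD, hxj⟩ := exists_Dmem hm hn B hx
      exact ⟨minE A B j x, j, hjD, x, hxj, rfl⟩
    rintro v ⟨j, hjD, x, hxj, rfl⟩
    calc minE A B j x ≤ purePay A x j :=
          csInf_le ((finite_purePay_set A x).subset (by rintro w ⟨k, -, rfl⟩; exact ⟨k, rfl⟩)).bddBelow
            ⟨j, fun i => rfl, rfl⟩
      _ ≤ alphaH A B := le_csSup hbddH ⟨j, x, hxj, rfl⟩
  exact ⟨le_antisymm hVL (le_trans hLH hHV), le_antisymm hLH (le_trans hHV hVL)⟩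
end
end

section
/- Lemma (degenerate 2×2 case): If a 2×2 bimatrix game Γ is degenerate for the leader (player I), i.e. Γ is not non-degenerate for player I, then X^L ⊆ NE(X): every commitment optimal strategy of player I is a Nash equilibrium strategy of the simultaneous move game. -/
open Matrix

noncomputable section

lemma fin2cases (k : Fin 2) : k = 0 ∨ k = 1 := by omega

lemma purePay_eq (A : Matrix (Fin 2) (Fin 2) ℝ) (x : Fin 2 → ℝ) (j : Fin 2) :
    purePay A x j = x 0 * A 0 j + x 1 * A 1 j := by
  simp [purePay, Matrix.vecMul, dotProduct, Fin.sum_univ_two]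

lemma pay_eq (A : Matrix (Fin 2) (Fin 2) ℝ) (x y : Fin 2 → ℝ) :
    pay A x y = x 0 * (A 0 0 * y 0 + A 0 1 * y 1) + x 1 * (A 1 0 * y 0 + A 1 1 * y 1) := by
  simp [pay, Matrix.mulVec, dotProduct, Fin.sum_univ_two]

lemma mem_simp_iff (x : Fin 2 → ℝ) : x ∈ Simp 2 ↔ (∀ i, 0 ≤ x i) ∧ x 0 + x 1 = 1 := by
  simp [Simp, stdSimplex, Fin.sum_univ_two]

lemma deg_row (B : Matrix (Fin 2) (Fin 2) ℝ) (hdeg : ¬ NondegFor B) :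
    ∃ i, B i 0 = B i 1 := by
  rw [NondegFor] at hdeg
  push_neg at hdeg
  obtain ⟨x, hxS, hlt⟩ := hdeg
  obtain ⟨hnn, hsum⟩ := (mem_simp_iff x).1 hxS
  have hz : x 0 = 0 ∨ x 1 = 0 := by
    by_contra h
    push_neg at h
    have hsupp : {i | x i ≠ 0} = Set.univ := by
      ext i
      simp only [Set.mem_setOf_eq, Set.mem_univ, iff_true]
      rcases fin2cases i with rfl | rfl
      · exact h.1
      · exact h.2
    have h1 : ({i | x i ≠ 0} : Set (Fin 2)).ncard = 2 := by
      rw [hsupp]; simp [Set.ncard_univ]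
    have h2 : (BRII B x).ncard ≤ 2 := by
      have := Set.ncard_le_ncard (Set.subset_univ (BRII B x)) Set.finite_univ
      simpa [Set.ncard_univ] using this
    omega
  have key : ∀ i0 i1 : Fin 2, x i0 = 0 → x i1 = 1 →
      ({i | x i ≠ 0} : Set (Fin 2)).ncard ≤ 1 → B i1 0 = B i1 1 := by
    intro i0 i1 h0 h1 hcard
    have hpos : 0 < ({i | x i ≠ 0} : Set (Fin 2)).ncard :=
      (Set.ncard_pos (Set.toFinite _)).2 ⟨i1, by simp [h1]⟩
    have hBR2 : 2 ≤ (BRII B x).ncard := by omega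
    have hBRu : BRII B x = Set.univ :=
      Set.eq_of_subset_of_ncard_le (Set.subset_univ _)
        (by simpa [Set.ncard_univ] using hBR2) Set.finite_univ
    have hm1 : (1 : Fin 2) ∈ BRII B x := by rw [hBRu]; trivial
    have hm0 : (0 : Fin 2) ∈ BRII B x := by rw [hBRu]; trivial
    have e1 : purePay B x 0 ≤ purePay B x 1 := hm1 0
    have e0 : purePay B x 1 ≤ purePay B x 0 := hm0 1
    rw [purePay_eq, purePay_eq] at e1 e0
    rcases fin2cases i0 with rfl | rfl <;> rcases fin2cases i1 with rfl | rfl <;>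
      first
        | (exfalso; rw [h0] at h1; norm_num at h1)
        | (rw [h0] at e0 e1; rw [h1] at e0 e1; linarith)
  rcases hz with h0 | h0
  · have h1 : x 1 = 1 := by linarith
    refine ⟨1, key 0 1 h0 h1 ?_⟩
    have hsub : {i | x i ≠ 0} ⊆ {1} := by
      intro i hi
      simp only [Set.mem_setOf_eq] at hi
      rcases fin2cases i with rfl | rfl
      · exact absurd h0 hi
      · rfl
    have := Set.ncard_le_ncard hsub (Set.finite_singleton 1)
    simpa using this
  · have h1 : x 0 = 1 := by linarith
    refine ⟨0, key 1 0 h0 h1 ?_⟩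
    have hsub : {i | x i ≠ 0} ⊆ {0} := by
      intro i hi
      simp only [Set.mem_setOf_eq] at hi
      rcases fin2cases i with rfl | rfl
      · rfl
      · exact absurd h0 hi
    have := Set.ncard_le_ncard hsub (Set.finite_singleton 0)
    simpa using this
lemma support_lambda (a b c d p0 : ℝ) (hp0 : 0 ≤ p0) (hp1 : p0 ≤ 1)
    (hmax : ∀ p : ℝ, 0 ≤ p → p ≤ 1 →
      min (p * a + (1 - p) * c) (p * b + (1 - p) * d) ≤
      min (p0 * a + (1 - p0) * c) (p0 * b + (1 - p0) * d)) :
    ∃ l : ℝ, 0 ≤ l ∧ l ≤ 1 ∧ ∀ p : ℝ, 0 ≤ p → p ≤ 1 →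
      (p - p0) * (l * (a - c) + (1 - l) * (b - d)) ≤ 0 := by
  rcases le_or_gt (a - c) 0 with h0 | h0 <;> rcases le_or_gt (b - d) 0 with h1 | h1
  · -- both slopes ≤ 0
    rcases h0.eq_or_lt with h0e | h0s
    · exact ⟨1, zero_le_one, le_rfl, fun p _ _ => by
        rw [h0e]; norm_num⟩
    rcases h1.eq_or_lt with h1e | h1s
    · exact ⟨0, le_rfl, zero_le_one, fun p _ _ => by
        rw [h1e]; norm_num⟩
    -- both < 0 : p0 = 0
    have hc := hmax 0 le_rfl zero_le_one
    have hA : min ((0:ℝ) * a + (1 - 0) * c) (0 * b + (1 - 0) * d) = min c d := by norm_num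
    rw [hA] at hc
    have hcc : min c d ≤ p0 * a + (1 - p0) * c := le_trans hc (min_le_left _ _)
    have hcd : min c d ≤ p0 * b + (1 - p0) * d := le_trans hc (min_le_right _ _)
    have hp00 : p0 = 0 := by
      rcases le_total c d with hle | hle
      · have hcc' : c ≤ p0 * a + (1 - p0) * c := by rwa [min_eq_left hle] at hcc
        have : p0 ≤ 0 := by nlinarith
        linarith
      · have hcd' : d ≤ p0 * b + (1 - p0) * d := by rwa [min_eq_right hle] at hcd
        have : p0 ≤ 0 := by nlinarith
        linarith
    refine ⟨0, le_rfl, zero_le_one, fun p hp _ => ?_⟩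
    rw [hp00]
    nlinarith [mul_nonneg hp (neg_nonneg.mpr h1)]
  · -- a - c ≤ 0 < b - d
    refine ⟨(b - d) / ((b - d) - (a - c)), div_nonneg h1.le (by linarith), ?_, ?_⟩
    · rw [div_le_one (by linarith)]; linarith
    · intro p _ _
      have hzero : (b - d) / ((b - d) - (a - c)) * (a - c) +
          (1 - (b - d) / ((b - d) - (a - c))) * (b - d) = 0 := by
        have hne : (b - d) - (a - c) ≠ 0 := ne_of_gt (by linarith)
        field_simp
        ring
      rw [hzero, mul_zero]
  · -- b - d ≤ 0 < a - c
    refine ⟨(-(b - d)) / ((a - c) - (b - d)), div_nonneg (by linarith) (by linarith), ?_, ?_⟩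
    · rw [div_le_one (by linarith)]; linarith
    · intro p _ _
      have hzero : (-(b - d)) / ((a - c) - (b - d)) * (a - c) +
          (1 - (-(b - d)) / ((a - c) - (b - d))) * (b - d) = 0 := by
        have hne : (a - c) - (b - d) ≠ 0 := ne_of_gt (by linarith)
        field_simp
        ring
      rw [hzero, mul_zero]
  · -- both > 0 : p0 = 1
    have hc := hmax 1 zero_le_one le_rfl
    have hA : min ((1:ℝ) * a + (1 - 1) * c) (1 * b + (1 - 1) * d) = min a b := by norm_num
    rw [hA] at hc
    have hca : min a b ≤ p0 * a + (1 - p0) * c := le_trans hc (min_le_left _ _)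
    have hcb : min a b ≤ p0 * b + (1 - p0) * d := le_trans hc (min_le_right _ _)
    have hp01 : p0 = 1 := by
      rcases le_total a b with hle | hle
      · have hca' : a ≤ p0 * a + (1 - p0) * c := by rwa [min_eq_left hle] at hca
        have : 1 ≤ p0 := by nlinarith
        linarith
      · have hcb' : b ≤ p0 * b + (1 - p0) * d := by rwa [min_eq_right hle] at hcb
        have : 1 ≤ p0 := by nlinarith
        linarith
    refine ⟨0, le_rfl, zero_le_one, fun p _ hp1' => ?_⟩
    rw [hp01]
    nlinarith [mul_nonneg (sub_nonneg.mpr hp1') h1.le]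
lemma case1 (A B : Matrix (Fin 2) (Fin 2) ℝ) (hEq : ∀ i, B i 0 = B i 1) :
    XLset A B ⊆ NEX A B := by
  intro x hx
  obtain ⟨j0, hj0, hxX, hmin⟩ := hx
  obtain ⟨hxS, hxBR⟩ := hxX
  obtain ⟨hxnn, hxsum⟩ := (mem_simp_iff x).1 hxS
  have hcol : ∀ (i k l : Fin 2), B i k = B i l := by
    intro i k l
    rcases fin2cases k with rfl | rfl <;> rcases fin2cases l with rfl | rfl <;>
      first | rfl | exact hEq i | exact (hEq i).symm
  have hminE : ∀ (j : Fin 2) (z : Fin 2 → ℝ),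
      minE A B j z = min (purePay A z 0) (purePay A z 1) := by
    intro j z
    have hset : {w | ∃ k ∈ Ecols B j, w = purePay A z k}
        = {purePay A z 0, purePay A z 1} := by
      ext w
      simp only [Set.mem_setOf_eq, Set.mem_insert_iff, Set.mem_singleton_iff]
      constructor
      · rintro ⟨k, -, rfl⟩
        rcases fin2cases k with rfl | rfl
        · exact Or.inl rfl
        · exact Or.inr rfl
      · rintro (rfl | rfl)
        · exact ⟨0, fun i => hcol i 0 j, rfl⟩
        · exact ⟨1, fun i => hcol i 1 j, rfl⟩
    rw [minE, hset]
    exact csInf_pair _ _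
  have hBR : ∀ (z : Fin 2 → ℝ) (j : Fin 2), j ∈ BRII B z := by
    intro z j k
    rw [purePay_eq, purePay_eq, hcol 0 k j, hcol 1 k j]
  have hbdd : BddAbove {v | ∃ j ∈ Dset B, ∃ z ∈ XReg B j, v = minE A B j z} := by
    refine ⟨|A 0 0| + |A 1 0|, ?_⟩
    rintro v ⟨j, -, z, ⟨hzS, -⟩, rfl⟩
    obtain ⟨hznn, hzsum⟩ := (mem_simp_iff z).1 hzS
    rw [hminE]
    refine le_trans (min_le_left _ _) ?_
    rw [purePay_eq]
    nlinarith [le_abs_self (A 0 0), le_abs_self (A 1 0), abs_nonneg (A 0 0),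
      abs_nonneg (A 1 0), hznn 0, hznn 1]
  have hmax : ∀ z ∈ Simp 2,
      min (purePay A z 0) (purePay A z 1) ≤ min (purePay A x 0) (purePay A x 1) := by
    intro z hz
    have hmem : min (purePay A z 0) (purePay A z 1)
        ∈ {v | ∃ j ∈ Dset B, ∃ z' ∈ XReg B j, v = minE A B j z'} :=
      ⟨j0, hj0, z, ⟨hz, hBR z j0⟩, (hminE j0 z).symm⟩
    calc min (purePay A z 0) (purePay A z 1) ≤ alphaL A B := le_csSup hbdd hmem
      _ = min (purePay A x 0) (purePay A x 1) := by rw [← hmin, hminE]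
  have hx1 : x 1 = 1 - x 0 := by linarith
  have hmaxp : ∀ p : ℝ, 0 ≤ p → p ≤ 1 →
      min (p * A 0 0 + (1 - p) * A 1 0) (p * A 0 1 + (1 - p) * A 1 1) ≤
      min (x 0 * A 0 0 + (1 - x 0) * A 1 0) (x 0 * A 0 1 + (1 - x 0) * A 1 1) := by
    intro p hp hp1
    have hzS : (![p, 1 - p] : Fin 2 → ℝ) ∈ Simp 2 := by
      rw [mem_simp_iff]
      refine ⟨fun i => ?_, by simp⟩
      rcases fin2cases i with rfl | rfl <;> simp <;> linarith
    have h := hmax _ hzS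
    rw [purePay_eq, purePay_eq, purePay_eq, purePay_eq, hx1] at h
    simpa using h
  obtain ⟨l, hl0, hl1, hkey⟩ := support_lambda (A 0 0) (A 0 1) (A 1 0) (A 1 1) (x 0)
    (hxnn 0) (by linarith [hxnn 1]) hmaxp
  refine ⟨![l, 1 - l], hxS, ?_, ?_, ?_⟩
  · rw [mem_simp_iff]
    refine ⟨fun i => ?_, by simp⟩
    rcases fin2cases i with rfl | rfl <;> simp <;> linarith
  · intro x' hx'
    obtain ⟨hnn', hsum'⟩ := (mem_simp_iff x').1 hx'
    rw [pay_eq, pay_eq]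
    simp only [Matrix.cons_val_zero, Matrix.cons_val_one, Matrix.head_cons]
    have hk := hkey (x' 0) (hnn' 0) (by linarith [hnn' 1])
    have hx1' : x' 1 = 1 - x' 0 := by linarith
    rw [hx1, hx1']
    nlinarith [hk]
  · intro y' hy'
    obtain ⟨hnn', hsum'⟩ := (mem_simp_iff y').1 hy'
    have he : pay B x y' = pay B x ![l, 1 - l] := by
      rw [pay_eq, pay_eq]
      simp only [Matrix.cons_val_zero, Matrix.cons_val_one, Matrix.head_cons]
      linear_combination (x 0 * B 0 0 + x 1 * B 1 0) * hsum' -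
        x 0 * (y' 1 - 1 + l) * hEq 0 - x 1 * (y' 1 - 1 + l) * hEq 1
    exact le_of_eq he
lemma case2 (A B : Matrix (Fin 2) (Fin 2) ℝ) (j j' : Fin 2) (hne : j ≠ j')
    (hdom : ∀ z ∈ Simp 2, purePay B z j' ≤ purePay B z j)
    (hstrict : ∀ z ∈ Simp 2, (∀ i, 0 < z i) → purePay B z j' < purePay B z j)
    (hce : ∃ i, B i j' ≠ B i j) :
    XLset A B ⊆ NEX A B := by
  have hmem2 : ∀ k : Fin 2, k = j ∨ k = j' := fun k => by omega
  have hXj : ∀ z ∈ Simp 2, z ∈ XReg B j := by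
    intro z hz
    refine ⟨hz, fun k => ?_⟩
    rcases hmem2 k with rfl | rfl
    · exact le_rfl
    · exact hdom z hz
  have hjD : j ∈ Dset B := by
    refine ⟨![1/2, 1/2], hXj _ ?_, fun i => ?_⟩
    · rw [mem_simp_iff]
      refine ⟨fun i => ?_, by norm_num⟩
      rcases fin2cases i with rfl | rfl <;> norm_num
    · rcases fin2cases i with rfl | rfl <;> norm_num
  have hj'D : j' ∉ Dset B := by
    rintro ⟨z, ⟨hzS, hzBR⟩, hzpos⟩
    exact absurd (hzBR j) (not_le.2 (hstrict z hzS hzpos))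
  have hminE : ∀ z : Fin 2 → ℝ, minE A B j z = purePay A z j := by
    intro z
    have hset : {w | ∃ k ∈ Ecols B j, w = purePay A z k} = {purePay A z j} := by
      ext w
      simp only [Set.mem_setOf_eq, Set.mem_singleton_iff]
      constructor
      · rintro ⟨k, hk, rfl⟩
        rcases hmem2 k with rfl | rfl
        · rfl
        · obtain ⟨i, hi⟩ := hce
          exact absurd (hk i) hi
      · rintro rfl
        exact ⟨j, fun i => rfl, rfl⟩
    rw [minE, hset, csInf_singleton]
  have hbdd : BddAbove {v | ∃ j1 ∈ Dset B, ∃ z ∈ XReg B j1, v = minE A B j1 z} := by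
    refine ⟨|A 0 j| + |A 1 j|, ?_⟩
    rintro v ⟨j1, hj1, z, ⟨hzS, -⟩, rfl⟩
    have hj1j : j1 = j := by
      rcases hmem2 j1 with rfl | rfl
      · rfl
      · exact absurd hj1 hj'D
    rw [hj1j]
    obtain ⟨hznn, hzsum⟩ := (mem_simp_iff z).1 hzS
    rw [hminE, purePay_eq]
    nlinarith [le_abs_self (A 0 j), le_abs_self (A 1 j), abs_nonneg (A 0 j),
      abs_nonneg (A 1 j), hznn 0, hznn 1]
  intro x hx
  obtain ⟨j0, hj0, hxX, hmin⟩ := hx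
  have hj0j : j0 = j := by
    rcases hmem2 j0 with rfl | rfl
    · rfl
    · exact absurd hj0 hj'D
  rw [hj0j] at hxX hmin
  obtain ⟨hxS, hxBR⟩ := hxX
  have hmax : ∀ z ∈ Simp 2, purePay A z j ≤ purePay A x j := by
    intro z hz
    have hmem : purePay A z j ∈ {v | ∃ j1 ∈ Dset B, ∃ z' ∈ XReg B j1, v = minE A B j1 z'} :=
      ⟨j, hjD, z, hXj z hz, (hminE z).symm⟩
    calc purePay A z j ≤ alphaL A B := le_csSup hbdd hmem
      _ = purePay A x j := by rw [← hmin, hminE]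
  have hpay : ∀ (M : Matrix (Fin 2) (Fin 2) ℝ) (z : Fin 2 → ℝ),
      pay M z (fun k => if k = j then 1 else 0) = purePay M z j := by
    intro M z
    rw [pay_eq, purePay_eq]
    rcases fin2cases j with rfl | rfl <;> norm_num
  refine ⟨fun k => if k = j then 1 else 0, hxS, ?_, ?_, ?_⟩
  · rw [mem_simp_iff]
    constructor
    · intro i; by_cases h : i = j <;> simp [h]
    · rcases fin2cases j with rfl | rfl <;> norm_num
  · intro x' hx'
    rw [hpay, hpay]
    exact hmax x' hx'
  · intro y' hy'
    obtain ⟨hnn', hsum'⟩ := (mem_simp_iff y').1 hy'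
    rw [hpay]
    have hsplit : pay B x y' = y' 0 * purePay B x 0 + y' 1 * purePay B x 1 := by
      rw [pay_eq, purePay_eq, purePay_eq]; ring
    rw [hsplit]
    have hdd : ∀ k : Fin 2, purePay B x k ≤ purePay B x j := by
      intro k
      rcases hmem2 k with rfl | rfl
      · exact le_rfl
      · exact hdom x hxS
    have hs : (y' 0 + y' 1) * purePay B x j = purePay B x j := by rw [hsum', one_mul]
    nlinarith [mul_le_mul_of_nonneg_left (hdd 0) (hnn' 0),
      mul_le_mul_of_nonneg_left (hdd 1) (hnn' 1), hs]
/-- if a 2×2 bimatrix game is degenerate for the leader (player I),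
then every commitment optimal strategy of player I is a Nash equilibrium strategy:
`X^L ⊆ NE(X)`. -/
theorem stmt12 (A B : Matrix (Fin 2) (Fin 2) ℝ) (hdeg : ¬ NondegFor B) :
    XLset A B ⊆ NEX A B := by
  obtain ⟨i, hi⟩ := deg_row B hdeg
  by_cases h0 : B 0 0 = B 0 1
  · by_cases h1 : B 1 0 = B 1 1
    · refine case1 A B fun r => ?_
      rcases fin2cases r with rfl | rfl
      · exact h0
      · exact h1
    · rcases lt_or_gt_of_ne h1 with hlt | hgt
      · refine case2 A B 1 0 (by omega) ?_ ?_ ⟨1, h1⟩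
        · intro z hz
          obtain ⟨hnn, hsum⟩ := (mem_simp_iff z).1 hz
          rw [purePay_eq, purePay_eq]
          have hz0 : z 0 * B 0 0 = z 0 * B 0 1 := by rw [h0]
          nlinarith [hz0, hnn 1]
        · intro z hz hpos
          rw [purePay_eq, purePay_eq]
          have hz0 : z 0 * B 0 0 = z 0 * B 0 1 := by rw [h0]
          nlinarith [hz0, mul_pos (hpos 1) (sub_pos.mpr hlt)]
      · refine case2 A B 0 1 (by omega) ?_ ?_ ⟨1, fun h => h1 h.symm⟩
        · intro z hz
          obtain ⟨hnn, hsum⟩ := (mem_simp_iff z).1 hz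
          rw [purePay_eq, purePay_eq]
          have hz0 : z 0 * B 0 0 = z 0 * B 0 1 := by rw [h0]
          nlinarith [hz0, hnn 1]
        · intro z hz hpos
          rw [purePay_eq, purePay_eq]
          have hz0 : z 0 * B 0 0 = z 0 * B 0 1 := by rw [h0]
          nlinarith [hz0, mul_pos (hpos 1) (sub_pos.mpr hgt)]
  · have h1 : B 1 0 = B 1 1 := by
      rcases fin2cases i with rfl | rfl
      · exact absurd hi h0
      · exact hi
    rcases lt_or_gt_of_ne h0 with hlt | hgt
    · refine case2 A B 1 0 (by omega) ?_ ?_ ⟨0, h0⟩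
      · intro z hz
        obtain ⟨hnn, hsum⟩ := (mem_simp_iff z).1 hz
        rw [purePay_eq, purePay_eq]
        have hz1 : z 1 * B 1 0 = z 1 * B 1 1 := by rw [h1]
        nlinarith [hz1, hnn 0]
      · intro z hz hpos
        rw [purePay_eq, purePay_eq]
        have hz1 : z 1 * B 1 0 = z 1 * B 1 1 := by rw [h1]
        nlinarith [hz1, mul_pos (hpos 0) (sub_pos.mpr hlt)]
    · refine case2 A B 0 1 (by omega) ?_ ?_ ⟨0, fun h => h0 h.symm⟩
      · intro z hz
        obtain ⟨hnn, hsum⟩ := (mem_simp_iff z).1 hz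
        rw [purePay_eq, purePay_eq]
        have hz1 : z 1 * B 1 0 = z 1 * B 1 1 := by rw [h1]
        nlinarith [hz1, hnn 0]
      · intro z hz hpos
        rw [purePay_eq, purePay_eq]
        have hz1 : z 1 * B 1 0 = z 1 * B 1 1 := by rw [h1]
        nlinarith [hz1, mul_pos (hpos 0) (sub_pos.mpr hgt)]
end
end
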